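/- Let Σ be a finite nonempty alphabet. A regular language L of unranked Σ-labelled trees is sparse (i.e. the relative number of n-node unranked trees in L tends to 0) if and only if some unranked Σ-labelled tree S does not appear as a subtree of any tree T ∈ L. -/

import Mathlib

open Filter Topology

namespace Sparse

inductive BTree (α : Type*) where
  | nil : BTree α
  | node : α → BTree α → BTree α → BTree α

namespace BTree

variable {α : Type*}

/-- The number of nodes of a binary tree. -/
def size : BTree α → ℕ
  | nil => 0
  | node _ l r => size l + size r + 1

/-- `Subtree S T` means `S = T`, or `T` is nonempty and `S` is a subtree of the left or
right subtree of the root of `T`. -/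
inductive Subtree : BTree α → BTree α → Prop where
  | refl (T : BTree α) : Subtree T T
  | left {S l r : BTree α} {a : α} : Subtree S l → Subtree S (node a l r)
  | right {S l r : BTree α} {a : α} : Subtree S r → Subtree S (node a l r)

end BTree

variable {α : Type*}

/-- A run of a tree automaton with transition relation `Δ` on a binary tree: the empty tree is
assigned `none` (i.e. `⊥`), and a nonempty tree with root label `a` and run values `ql`, `qr` on
the two subtrees is assigned a state `q` with `(ql, qr, a, q) ∈ Δ`. -/
inductive Run {Q : Type*} (Δ : Option Q → Option Q → α → Q → Prop) :
    BTree α → Option Q → Prop where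
  | nil : Run Δ BTree.nil none
  | node {a : α} {l r : BTree α} {ql qr : Option Q} {q : Q} :
      Run Δ l ql → Run Δ r qr → Δ ql qr a q → Run Δ (BTree.node a l r) (some q)

/-- A tree automaton with transitions `Δ` and accepting states `F` accepts `T` if some run
assigns `T` a state in `F`. -/
def TAccepts {Q : Type*} (Δ : Option Q → Option Q → α → Q → Prop) (F : Set Q)
    (T : BTree α) : Prop :=
  ∃ q ∈ F, Run Δ T (some q)

/-- A tree language is regular iff it is the set of trees accepted by some tree automaton
with finitely many states. -/
def RegularTreeLang (L : Set (BTree α)) : Prop :=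
  ∃ (Q : Type) (_ : Fintype Q) (Δ : Option Q → Option Q → α → Q → Prop) (F : Set Q),
    L = {T | TAccepts Δ F T}

/-- The relative number of `n`-node trees in `L`:
`|L ∩ ℬ^Σ_n| / (C_n ⬝ |Σ|^n)`, where `C_n` is the `n`-th Catalan number. -/
noncomputable def density [Fintype α] (L : Set (BTree α)) (n : ℕ) : ℝ :=
  (Nat.card {T : BTree α // T ∈ L ∧ T.size = n} : ℝ) /
    ((catalan n : ℝ) * (Fintype.card α : ℝ) ^ n)

/-- `L` has asymptotic density `c` if `density L n` tends to `c` as `n → ∞`. -/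
def HasDensity [Fintype α] (L : Set (BTree α)) (c : ℝ) : Prop :=
  Tendsto (density L) atTop (𝓝 c)

/-- The upper asymptotic density `P̄_lim(L) = limsup_n density L n`. -/
noncomputable def upperDensity [Fintype α] (L : Set (BTree α)) : ℝ :=
  limsup (density L) atTop

/-- `LT = {conc_a(S, T) : a ∈ Σ, S ∈ L}`. -/
def concL (L : Set (BTree α)) (T : BTree α) : Set (BTree α) :=
  {X | ∃ (a : α) (S : BTree α), S ∈ L ∧ X = BTree.node a S T}

/-- `LT⁻¹ = {S : ∃ a, conc_a(S, T) ∈ L}`. -/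
def quotR (L : Set (BTree α)) (T : BTree α) : Set (BTree α) :=
  {S | ∃ a : α, BTree.node a S T ∈ L}

/-- `T⁻¹L = {S : ∃ a, conc_a(T, S) ∈ L}`. -/
def quotL (T : BTree α) (L : Set (BTree α)) : Set (BTree α) :=
  {S | ∃ a : α, BTree.node a T S ∈ L}

/-- `L[T_k, …, T_1]⁻¹`, where the list is `[T_k, …, T_1]` (so the head is `T_k`):
`L[]⁻¹ = L` and `L[T_k,…,T_1]⁻¹ = (L[T_{k-1},…,T_1]⁻¹)T_k⁻¹ ∪ T_k⁻¹(L[T_{k-1},…,T_1]⁻¹)`. -/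
def quotIter (L : Set (BTree α)) : List (BTree α) → Set (BTree α)
  | [] => L
  | T :: Ts => quotR (quotIter L Ts) T ∪ quotL T (quotIter L Ts)

/-- A state `q` is reachable if some run of the automaton on some tree assigns `q` to the tree. -/
def TReachable {Q : Type*} (Δ : Option Q → Option Q → α → Q → Prop) (q : Q) : Prop :=
  ∃ T : BTree α, Run Δ T (some q)

/-- A set of states `V` is a sink if every transition involving a state of `V` as one of the
two child values leads into `V`. -/
def Sink {Q : Type*} (Δ : Option Q → Option Q → α → Q → Prop) (V : Set Q) : Prop :=
  ∀ q ∈ V, ∀ (q' : Option Q) (a : α) (q'' : Q),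
    (Δ (some q) q' a q'' ∨ Δ q' (some q) a q'') → q'' ∈ V

/-- Unranked Σ-labelled trees: a root label together with a finite ordered list of subtrees. -/
inductive UTree (α : Type*) where
  | node : α → List (UTree α) → UTree α

/-- The number of nodes of an unranked tree. -/
def usize : UTree α → ℕ
  | .node _ ts => 1 + (ts.attach.map (fun t => usize t.1)).sum
decreasing_by
  have := List.sizeOf_lt_of_mem t.2
  cases t; simp_all; omega

/-- `USubtree S T`: `S` consists of a node of `T` together with all its descendants. -/
inductive USubtree : UTree α → UTree α → Prop where
  | refl (T : UTree α) : USubtree T T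
  | child {S T : UTree α} {a : α} {ts : List (UTree α)} :
      T ∈ ts → USubtree S T → USubtree S (UTree.node a ts)

/-- First-child/next-sibling encoding of a forest of unranked trees as a binary tree. -/
def encodeF : List (UTree α) → BTree α
  | [] => BTree.nil
  | (UTree.node a ts) :: rest => BTree.node a (encodeF ts) (encodeF rest)

/-- The binary encoding `T^♭` of an unranked tree `T` (its root has no right child). -/
def encodeU (T : UTree α) : BTree α := encodeF [T]

section AuxA
variable {α : Type*}

theorem size_eq_zero_iff {B : BTree α} : B.size = 0 ↔ B = BTree.nil := by
  cases B <;> simp [BTree.size]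

theorem finite_size_le [Finite α] (n : ℕ) : {B : BTree α | B.size ≤ n}.Finite := by
  induction n with
  | zero =>
    refine Set.Finite.subset (Set.finite_singleton BTree.nil) ?_
    intro B hB
    simp only [Set.mem_setOf_eq, Nat.le_zero] at hB
    simp [size_eq_zero_iff.mp hB]
  | succ n ih =>
    have h : {B : BTree α | B.size ≤ n + 1} ⊆
        insert BTree.nil ((fun x : α × BTree α × BTree α => BTree.node x.1 x.2.1 x.2.2) ''
          (Set.univ ×ˢ ({B : BTree α | B.size ≤ n} ×ˢ {B : BTree α | B.size ≤ n}))) := by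
      intro B hB
      cases B with
      | nil => exact Set.mem_insert _ _
      | node a l r =>
        refine Set.mem_insert_of_mem _ ⟨⟨a, l, r⟩, ?_, rfl⟩
        simp only [Set.mem_setOf_eq, BTree.size] at hB
        exact ⟨trivial, by simp only [Set.mem_setOf_eq]; omega, by simp only [Set.mem_setOf_eq]; omega⟩
    exact Set.Finite.subset ((Set.Finite.image _ (Set.finite_univ.prod (ih.prod ih))).insert _) h

theorem finite_subtype_size [Finite α] (n : ℕ) : Finite {B : BTree α // B.size = n} := by
  have h : {B : BTree α | B.size = n}.Finite :=
    (finite_size_le n).subset (fun B hB => le_of_eq hB)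
  exact h.to_subtype

/-- number of labelled binary trees of size `n` -/
noncomputable def cnt (α : Type*) (n : ℕ) : ℕ := Nat.card {B : BTree α // B.size = n}

theorem cnt_zero : cnt α 0 = 1 := by
  have e : {B : BTree α // B.size = 0} ≃ Unit :=
    { toFun := fun _ => PUnit.unit
      invFun := fun _ => ⟨BTree.nil, rfl⟩
      left_inv := fun ⟨B, h⟩ => Subtype.ext (size_eq_zero_iff.mp h).symm
      right_inv := fun _ => rfl }
  rw [cnt, Nat.card_congr e]; simp

def sizeEquiv (n : ℕ) : {B : BTree α // B.size = n + 1} ≃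
    (Σ i : Fin (n + 1), α × {B : BTree α // B.size = i.1} × {B : BTree α // B.size = n - i.1}) where
  toFun := fun x =>
    match x with
    | ⟨BTree.nil, h⟩ => absurd h (by simp [BTree.size])
    | ⟨BTree.node a l r, h⟩ =>
      ⟨⟨l.size, by simp only [BTree.size] at h; omega⟩, a, ⟨l, rfl⟩,
        ⟨r, by show r.size = n - l.size; simp only [BTree.size] at h; omega⟩⟩
  invFun := fun x =>
    match x with
    | ⟨⟨i, hi⟩, a, ⟨l, hl⟩, ⟨r, hr⟩⟩ =>
      ⟨BTree.node a l r, by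
        have hl' : l.size = i := hl
        have hr' : r.size = n - i := hr
        simp only [BTree.size]; omega⟩
  left_inv := by rintro ⟨B, h⟩; cases B with
    | nil => exact absurd h (by simp [BTree.size])
    | node a l r => rfl
  right_inv := by
    rintro ⟨⟨i, hi⟩, a, ⟨l, hl⟩, ⟨r, hr⟩⟩
    have hv : l.size = i := hl
    subst hv
    rfl

theorem cnt_succ [Fintype α] (n : ℕ) :
    cnt α (n + 1) = ∑ i : Fin (n + 1), Fintype.card α * cnt α i.1 * cnt α (n - i.1) := by
  classical
  letI : ∀ m : ℕ, Fintype {B : BTree α // B.size = m} :=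
    fun m => @Fintype.ofFinite _ (finite_subtype_size m)
  rw [cnt, Nat.card_congr (sizeEquiv (α := α) n), Nat.card_eq_fintype_card, Fintype.card_sigma]
  refine Finset.sum_congr rfl fun i _ => ?_
  rw [Fintype.card_prod, Fintype.card_prod, cnt, cnt, Nat.card_eq_fintype_card,
    Nat.card_eq_fintype_card, mul_assoc]

theorem cnt_eq [Fintype α] (n : ℕ) : cnt α n = Fintype.card α ^ n * catalan n := by
  induction n using Nat.strong_induction_on with
  | _ n ih =>
    match n with
    | 0 => simp [cnt_zero]
    | n + 1 =>
      rw [cnt_succ, catalan_succ, Finset.mul_sum]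
      refine Finset.sum_congr rfl fun i _ => ?_
      rw [ih i.1 (by omega), ih (n - i.1) (by omega)]
      have h : (Fintype.card α) ^ (n + 1)
          = Fintype.card α * (Fintype.card α) ^ i.1 * (Fintype.card α) ^ (n - i.1) := by
        rw [mul_assoc, ← pow_add]
        rw [(by omega : i.1 + (n - i.1) = n), ← pow_succ']
      rw [h]; ring

/-- decoding of a binary tree into a forest -/
def decodeF : BTree α → List (UTree α)
  | BTree.nil => []
  | BTree.node a l r => UTree.node a (decodeF l) :: decodeF r

theorem encodeF_decodeF (B : BTree α) : encodeF (decodeF B) = B := by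
  induction B with
  | nil => simp [decodeF, encodeF]
  | node a l r ihl ihr => simp [decodeF, encodeF, ihl, ihr]

theorem decodeF_encodeF (F : List (UTree α)) : decodeF (encodeF F) = F := by
  suffices h : ∀ (B : BTree α) (F : List (UTree α)), encodeF F = B → decodeF B = F from
    h _ F rfl
  intro B
  induction B with
  | nil =>
    intro F hF
    match F with
    | [] => rfl
    | (UTree.node a ts) :: rest => simp [encodeF] at hF
  | node a l r ihl ihr =>
    intro F hF
    match F with
    | [] => simp [encodeF] at hF
    | (UTree.node b ts) :: rest =>
      rw [encodeF] at hF
      injection hF with h1 h2 h3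
      subst h1
      simp [decodeF, ihl _ h2, ihr _ h3]

theorem encodeF_injective : Function.Injective (encodeF (α := α)) := by
  intro F G h
  rw [← decodeF_encodeF F, ← decodeF_encodeF G, h]

theorem usize_node (a : α) (ts : List (UTree α)) :
    usize (UTree.node a ts) = 1 + (ts.map usize).sum := by
  rw [usize]
  congr 1
  rw [List.attach_map_val]

theorem usize_pos (T : UTree α) : 1 ≤ usize T := by
  cases T with
  | node a ts => rw [usize_node]; omega

/-- total size of a forest -/
def fsize (F : List (UTree α)) : ℕ := (F.map usize).sum

theorem size_encodeF (F : List (UTree α)) : (encodeF F).size = fsize F := by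
  suffices h : ∀ (B : BTree α) (F : List (UTree α)), encodeF F = B → B.size = fsize F from
    h _ F rfl
  intro B
  induction B with
  | nil =>
    intro F hF
    match F with
    | [] => rfl
    | (UTree.node a ts) :: rest => simp [encodeF] at hF
  | node a l r ihl ihr =>
    intro F hF
    match F with
    | [] => simp [encodeF] at hF
    | (UTree.node b ts) :: rest =>
      rw [encodeF] at hF
      injection hF with h1 h2 h3
      rw [BTree.size, ihl _ h2, ihr _ h3]
      simp only [fsize, List.map_cons, List.sum_cons, usize_node]
      omega

theorem size_encodeU (T : UTree α) : (encodeU T).size = usize T := by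
  rw [encodeU, size_encodeF, fsize]; simp

theorem encodeU_injective : Function.Injective (encodeU (α := α)) := by
  intro T₁ T₂ h
  have h2 : [T₁] = [T₂] := encodeF_injective h
  simpa using h2

def utreeEquiv (m : ℕ) : {T : UTree α // usize T = m + 1} ≃ α × {B : BTree α // B.size = m} where
  toFun := fun x =>
    match x with
    | ⟨UTree.node a ts, h⟩ =>
      (a, ⟨encodeF ts, by rw [size_encodeF]; rw [usize_node] at h; simp [fsize]; omega⟩)
  invFun := fun ⟨a, ⟨B, hB⟩⟩ =>
    ⟨UTree.node a (decodeF B), by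
      rw [usize_node, ← fsize, ← size_encodeF, encodeF_decodeF]; omega⟩
  left_inv := by
    rintro ⟨T, h⟩
    cases T with
    | node a ts => simp [decodeF_encodeF]
  right_inv := by
    rintro ⟨a, ⟨B, hB⟩⟩
    simp [encodeF_decodeF]

theorem finite_subtype_usize [Finite α] (n : ℕ) : Finite {T : UTree α // usize T = n} := by
  match n with
  | 0 =>
    have : IsEmpty {T : UTree α // usize T = 0} := by
      refine ⟨fun ⟨T, hT⟩ => ?_⟩
      have := usize_pos T; omega
    exact inferInstance
  | m + 1 =>
    have := finite_subtype_size (α := α) m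
    exact Finite.of_equiv _ (utreeEquiv m).symm

/-- number of unranked trees of size `n` -/
noncomputable def ucnt (α : Type*) (n : ℕ) : ℕ := Nat.card {T : UTree α // usize T = n}

theorem ucnt_succ [Fintype α] (m : ℕ) : ucnt α (m + 1) = Fintype.card α * cnt α m := by
  rw [ucnt, Nat.card_congr (utreeEquiv m), Nat.card_prod, cnt, Nat.card_eq_fintype_card]

end AuxA

section AuxB
variable {α : Type*}

theorem succ_succ_mul_catalan (n : ℕ) :
    (n + 2) * catalan (n + 1) = 2 * (2 * n + 1) * catalan n := by
  have h1 := succ_mul_catalan_eq_centralBinom (n + 1)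
  have h2 := Nat.succ_mul_centralBinom_succ n
  have h3 := succ_mul_catalan_eq_centralBinom n
  have key : (n + 1) * ((n + 2) * catalan (n + 1)) = (n + 1) * (2 * (2 * n + 1) * catalan n) := by
    calc (n + 1) * ((n + 2) * catalan (n + 1)) = (n + 1) * Nat.centralBinom (n + 1) := by
          rw [h1]
      _ = 2 * (2 * n + 1) * Nat.centralBinom n := h2
      _ = 2 * (2 * n + 1) * ((n + 1) * catalan n) := by rw [h3]
      _ = (n + 1) * (2 * (2 * n + 1) * catalan n) := by ring
  exact Nat.eq_of_mul_eq_mul_left (by omega) key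

theorem catalan_succ_le (n : ℕ) : catalan (n + 1) ≤ 4 * catalan n := by
  have h := succ_succ_mul_catalan n
  have : (n + 2) * catalan (n + 1) ≤ (n + 2) * (4 * catalan n) := by
    rw [h]; nlinarith [Nat.zero_le (catalan n)]
  exact Nat.le_of_mul_le_mul_left this (by omega)

theorem catalan_pos' (n : ℕ) : 0 < catalan n := by
  have h := succ_mul_catalan_eq_centralBinom n
  have h2 := Nat.centralBinom_pos n
  by_contra hc
  push_neg at hc
  interval_cases (catalan n)
  omega
theorem catalan_monotone (n : ℕ) : catalan n ≤ catalan (n + 1) := by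
  have h := succ_succ_mul_catalan n
  have : (n + 2) * catalan n ≤ (n + 2) * catalan (n + 1) := by
    rw [h]; exact Nat.mul_le_mul_right _ (by omega)
  exact Nat.le_of_mul_le_mul_left this (by omega)

theorem catalan_mono {m n : ℕ} (h : m ≤ n) : catalan m ≤ catalan n := by
  induction n with
  | zero => simpa [Nat.le_zero.mp h]
  | succ n ih =>
    rcases Nat.lt_or_ge m (n + 1) with h' | h'
    · exact (ih (by omega)).trans (catalan_monotone n)
    · have : m = n + 1 := by omega
      simp [this]

theorem four_pow_le_catalan (n : ℕ) : 4 ^ n ≤ 2 * (n + 1) ^ 2 * catalan n := by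
  rcases Nat.eq_zero_or_pos n with rfl | hn
  · simp
  · have h := Nat.four_pow_le_two_mul_self_mul_centralBinom n hn
    have h2 := succ_mul_catalan_eq_centralBinom n
    calc 4 ^ n ≤ 2 * n * Nat.centralBinom n := h
      _ = 2 * n * ((n + 1) * catalan n) := by rw [h2]
      _ ≤ 2 * (n + 1) ^ 2 * catalan n := by nlinarith [Nat.zero_le (catalan n)]

/-- Binary contexts: a binary tree with a single hole. -/
inductive Ctx (α : Type*) where
  | hole : Ctx α
  | nodeL : α → Ctx α → BTree α → Ctx α
  | nodeR : α → BTree α → Ctx α → Ctx α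

def fill : Ctx α → BTree α → BTree α
  | .hole, B => B
  | .nodeL a C r, B => .node a (fill C B) r
  | .nodeR a l C, B => .node a l (fill C B)

def csize : Ctx α → ℕ
  | .hole => 0
  | .nodeL _ C r => csize C + r.size + 1
  | .nodeR _ l C => l.size + csize C + 1

theorem size_fill (C : Ctx α) (B : BTree α) : (fill C B).size = csize C + B.size := by
  induction C with
  | hole => simp [fill, csize]
  | nodeL a C r ih => simp [fill, csize, BTree.size, ih]; omega
  | nodeR a l C ih => simp [fill, csize, BTree.size, ih]; omega

theorem fill_injective (C : Ctx α) : Function.Injective (fill C) := by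
  induction C with
  | hole => exact fun _ _ h => h
  | nodeL a C r ih => intro B₁ B₂ h; injection h with _ h2 _; exact ih h2
  | nodeR a l C ih => intro B₁ B₂ h; injection h with _ _ h3; exact ih h3

/-- Occurrence of the pattern "node labelled `a` with left subtree `P`" in a binary tree. -/
def OccAt (a : α) (P B : BTree α) : Prop := ∃ C R, B = fill C (BTree.node a P R)

theorem occ_here (a : α) (P R : BTree α) : OccAt a P (BTree.node a P R) :=
  ⟨Ctx.hole, R, rfl⟩

theorem occ_left {a : α} {P l : BTree α} (b : α) (r : BTree α) (h : OccAt a P l) :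
    OccAt a P (BTree.node b l r) := by
  obtain ⟨C, R, rfl⟩ := h
  exact ⟨Ctx.nodeL b C r, R, rfl⟩

theorem occ_right {a : α} {P r : BTree α} (b : α) (l : BTree α) (h : OccAt a P r) :
    OccAt a P (BTree.node b l r) := by
  obtain ⟨C, R, rfl⟩ := h
  exact ⟨Ctx.nodeR b l C, R, rfl⟩

theorem occ_not_nil {a : α} {P : BTree α} (h : OccAt a P BTree.nil) : False := by
  obtain ⟨C, R, hC⟩ := h
  cases C <;> simp [fill] at hC

theorem occ_elim {a : α} {P : BTree α} {b : α} {l r : BTree α}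
    (h : OccAt a P (BTree.node b l r)) :
    (b = a ∧ l = P) ∨ OccAt a P l ∨ OccAt a P r := by
  obtain ⟨C, R, hC⟩ := h
  cases C with
  | hole =>
    rw [fill] at hC
    injection hC with h1 h2 h3
    exact Or.inl ⟨h1, h2⟩
  | nodeL a' C' r' =>
    rw [fill] at hC
    injection hC with h1 h2 h3
    exact Or.inr (Or.inl ⟨C', R, h2⟩)
  | nodeR a' l' C' =>
    rw [fill] at hC
    injection hC with h1 h2 h3
    exact Or.inr (Or.inr ⟨C', R, h3⟩)

def rootL : UTree α → α
  | .node a _ => a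

def chl : UTree α → List (UTree α)
  | .node _ ts => ts

theorem usize_le_of_usubtree {S T : UTree α} (h : USubtree S T) : usize S ≤ usize T := by
  induction h with
  | refl => exact le_rfl
  | child hmem hsub ih =>
    rename_i T' a ts
    calc usize S ≤ usize T' := ih
      _ ≤ (ts.map usize).sum :=
        List.single_le_sum (fun _ _ => Nat.zero_le _) _ (List.mem_map_of_mem (f := usize) hmem)
      _ ≤ usize (UTree.node a ts) := by rw [usize_node]; omega

theorem occ_liftF {sa : α} {P : BTree α} (ts : List (UTree α)) (t' : UTree α) (hmem : t' ∈ ts)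
    (h : ∀ rest, OccAt sa P (encodeF (t' :: rest))) : OccAt sa P (encodeF ts) := by
  induction ts with
  | nil => simp at hmem
  | cons u tail ih =>
    rcases List.mem_cons.mp hmem with rfl | hmem'
    · exact h tail
    · cases u with
      | node a0 cs0 =>
        rw [encodeF]
        exact occ_right _ _ (ih hmem')

theorem occ_of_usubtree {S u : UTree α} (h : USubtree S u) (rest : List (UTree α)) :
    OccAt (rootL S) (encodeF (chl S)) (encodeF (u :: rest)) := by
  induction h generalizing rest with
  | refl =>
    cases S with
    | node a ts => rw [encodeF]; exact occ_here _ _ _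
  | child hmem hsub ih =>
    rename_i T' a ts
    rw [encodeF]
    exact occ_left _ _ (occ_liftF ts T' hmem ih)

theorem usubtree_of_occ {S : UTree α} :
    ∀ (B : BTree α) (F : List (UTree α)), encodeF F = B →
      OccAt (rootL S) (encodeF (chl S)) B → ∃ t ∈ F, USubtree S t := by
  intro B
  induction B with
  | nil => intro F _ hocc; exact absurd hocc (fun h => occ_not_nil h)
  | node a l r ihl ihr =>
    intro F hF hocc
    match F with
    | [] => simp [encodeF] at hF
    | (UTree.node b ts) :: rest =>
      rw [encodeF] at hF
      injection hF with h1 h2 h3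
      rcases occ_elim hocc with ⟨hb, hl⟩ | hol | hor
      · cases S with
        | node sa scs =>
          refine ⟨UTree.node b ts, List.mem_cons_self, ?_⟩
          have hts : ts = scs := encodeF_injective (by rw [h2, hl]; rfl)
          have hba : b = sa := by rw [h1, hb]; rfl
          rw [hts, hba]
          exact USubtree.refl _
      · obtain ⟨t, ht, hsub⟩ := ihl ts h2 hol
        exact ⟨UTree.node b ts, List.mem_cons_self, USubtree.child ht hsub⟩
      · obtain ⟨t, ht, hsub⟩ := ihr rest h3 hor
        exact ⟨t, List.mem_cons.mpr (Or.inr ht), hsub⟩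

theorem occ_encodeU_iff {S T : UTree α} :
    OccAt (rootL S) (encodeF (chl S)) (encodeU T) ↔ USubtree S T := by
  constructor
  · intro h
    obtain ⟨t, ht, hsub⟩ := usubtree_of_occ (encodeU T) [T] rfl h
    simp at ht; rwa [← ht]
  · intro h; exact occ_of_usubtree h []

theorem pat_not_occ_pat {S : UTree α} :
    ¬ OccAt (rootL S) (encodeF (chl S)) (encodeF (chl S)) := by
  intro h
  obtain ⟨t, ht, hsub⟩ := usubtree_of_occ (encodeF (chl S)) (chl S) rfl h
  have h1 := usize_le_of_usubtree hsub
  cases S with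
  | node sa scs =>
    have h2 : usize t ≤ (scs.map usize).sum :=
      List.single_le_sum (fun _ _ => Nat.zero_le _) _ (List.mem_map_of_mem (f := usize) ht)
    rw [usize_node] at h1
    simp [chl] at h2 ht ⊢
    omega

section Runs
variable {Q : Type*} {Δ : Option Q → Option Q → α → Q → Prop}

theorem run_node_some {a : α} {l r : BTree α} {v : Option Q}
    (h : Run Δ (BTree.node a l r) v) : ∃ q, v = some q := by
  cases h with
  | node _ _ _ => exact ⟨_, rfl⟩

/-- Run on a context: maps the value plugged at the hole to the value at the root. -/
inductive RunC (Δ : Option Q → Option Q → α → Q → Prop) : Ctx α → Option Q → Option Q → Prop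
  | hole (p : Option Q) : RunC Δ Ctx.hole p p
  | nodeL {a : α} {C : Ctx α} {r : BTree α} {p ql qr : Option Q} {q : Q} :
      RunC Δ C p ql → Run Δ r qr → Δ ql qr a q → RunC Δ (Ctx.nodeL a C r) p (some q)
  | nodeR {a : α} {C : Ctx α} {l : BTree α} {p ql qr : Option Q} {q : Q} :
      Run Δ l ql → RunC Δ C p qr → Δ ql qr a q → RunC Δ (Ctx.nodeR a l C) p (some q)

theorem run_fill_decomp {C : Ctx α} {B : BTree α} {v : Option Q}
    (h : Run Δ (fill C B) v) : ∃ p, Run Δ B p ∧ RunC Δ C p v := by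
  induction C generalizing v with
  | hole => exact ⟨v, h, RunC.hole v⟩
  | nodeL a C' r ih =>
    rw [fill] at h
    cases h with
    | node hl hr hd =>
      obtain ⟨p, h1, h2⟩ := ih hl
      exact ⟨p, h1, RunC.nodeL h2 hr hd⟩
  | nodeR a l C' ih =>
    rw [fill] at h
    cases h with
    | node hl hr hd =>
      obtain ⟨p, h1, h2⟩ := ih hr
      exact ⟨p, h1, RunC.nodeR hl h2 hd⟩

theorem run_fill_comp {C : Ctx α} {B : BTree α} {p v : Option Q}
    (hB : Run Δ B p) (hC : RunC Δ C p v) : Run Δ (fill C B) v := by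
  induction hC with
  | hole => exact hB
  | nodeL h1 h2 h3 ih => exact Run.node (ih hB) h2 h3
  | nodeR h1 h2 h3 ih => exact Run.node h1 (ih hB) h3

/-- `q` is co-accessible: some context takes it to an accepting state. -/
def CoAcc (Δ : Option Q → Option Q → α → Q → Prop) (F : Set Q) (q : Q) : Prop :=
  ∃ (C : Ctx α) (qf : Q), qf ∈ F ∧ RunC Δ C (some q) (some qf)

theorem exists_coacc_bound [Fintype Q] (F : Set Q) :
    ∃ M : ℕ, ∀ q : Q, CoAcc Δ F q →
      ∃ (C : Ctx α) (qf : Q), qf ∈ F ∧ RunC Δ C (some q) (some qf) ∧ csize C ≤ M := by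
  classical
  have hex : ∀ q : Q, ∃ M : ℕ, CoAcc Δ F q →
      ∃ (C : Ctx α) (qf : Q), qf ∈ F ∧ RunC Δ C (some q) (some qf) ∧ csize C ≤ M := by
    intro q
    by_cases h : CoAcc Δ F q
    · obtain ⟨C, qf, h1, h2⟩ := h
      exact ⟨csize C, fun _ => ⟨C, qf, h1, h2, le_rfl⟩⟩
    · exact ⟨0, fun hc => absurd hc h⟩
  choose g hg using hex
  refine ⟨Finset.univ.sup g, fun q hq => ?_⟩
  obtain ⟨C, qf, h1, h2, h3⟩ := hg q hq
  exact ⟨C, qf, h1, h2, h3.trans (Finset.le_sup (Finset.mem_univ q))⟩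

end Runs
end AuxB

section AuxC
variable {α : Type*}

/-- composition of contexts (first argument outer). -/
def Ctx.comp : Ctx α → Ctx α → Ctx α
  | .hole, D => D
  | .nodeL a C r, D => .nodeL a (Ctx.comp C D) r
  | .nodeR a l C, D => .nodeR a l (Ctx.comp C D)

theorem runC_comp {Q : Type*} {Δ : Option Q → Option Q → α → Q → Prop}
    {C D : Ctx α} {p v w : Option Q}
    (hD : RunC Δ D p v) (hC : RunC Δ C v w) : RunC Δ (Ctx.comp C D) p w := by
  induction hC with
  | hole => exact hD
  | nodeL h1 h2 h3 ih => exact RunC.nodeL (ih hD) h2 h3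
  | nodeR h1 h2 h3 ih => exact RunC.nodeR h1 (ih hD) h3

theorem catalan_add_le (a d : ℕ) : catalan (a + d) ≤ 4 ^ d * catalan a := by
  induction d with
  | zero => simp
  | succ d ih =>
    calc catalan (a + (d + 1)) = catalan ((a + d) + 1) := by ring_nf
      _ ≤ 4 * catalan (a + d) := catalan_succ_le _
      _ ≤ 4 * (4 ^ d * catalan a) := by omega
      _ = 4 ^ (d + 1) * catalan a := by ring

theorem catalan_le_of_le {b a M : ℕ} (h : b ≤ a + M) : catalan b ≤ 4 ^ M * catalan a :=
  (catalan_mono h).trans (catalan_add_le a M)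

theorem cnt_pos [Fintype α] [Nonempty α] (n : ℕ) : 0 < cnt α n := by
  rw [cnt_eq]
  exact Nat.mul_pos (pow_pos Fintype.card_pos n) (catalan_pos' n)

theorem finite_accepted [Finite α] {Q : Type*} {Δ : Option Q → Option Q → α → Q → Prop}
    {F : Set Q} (n : ℕ) : Finite {B : BTree α // TAccepts Δ F B ∧ B.size = n} := by
  have := finite_subtype_size (α := α) n
  refine Finite.of_injective (fun x => (⟨x.1, x.2.2⟩ : {B : BTree α // B.size = n})) ?_
  intro x y h
  have h2 := congrArg Subtype.val h
  exact Subtype.ext h2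

theorem card_accepted_eq {Q : Type*} {Δ : Option Q → Option Q → α → Q → Prop} {F : Set Q}
    {L : Set (UTree α)} (hL : encodeU '' L = {T | TAccepts Δ F T}) (n : ℕ) :
    Nat.card {B : BTree α // TAccepts Δ F B ∧ B.size = n}
      = Nat.card {T : UTree α // T ∈ L ∧ usize T = n} := by
  refine (Nat.card_congr (Equiv.ofBijective
    (fun x : {T : UTree α // T ∈ L ∧ usize T = n} =>
      (⟨encodeU x.1, by
          have : encodeU x.1 ∈ {T | TAccepts Δ F T} := by
            rw [← hL]; exact Set.mem_image_of_mem _ x.2.1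
          exact this, by rw [size_encodeU]; exact x.2.2⟩ :
        {B : BTree α // TAccepts Δ F B ∧ B.size = n}))
    ⟨fun x y h => Subtype.ext (encodeU_injective (congrArg Subtype.val h)), ?_⟩)).symm
  rintro ⟨B, hacc, hsz⟩
  have : B ∈ encodeU '' L := by rw [hL]; exact hacc
  obtain ⟨T, hTL, rfl⟩ := this
  exact ⟨⟨T, hTL, by rw [← size_encodeU]; exact hsz⟩, rfl⟩

theorem coacc_of_tree [Nonempty α] {Q : Type*} {Δ : Option Q → Option Q → α → Q → Prop}
    {F : Set Q} {L : Set (UTree α)}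
    (hL : encodeU '' L = {T | TAccepts Δ F T})
    (hall : ∀ S : UTree α, ∃ T ∈ L, USubtree S T)
    (a0 : α) (l0 r0 : BTree α) :
    ∃ q : Q, Run Δ (BTree.node a0 l0 r0) (some q) ∧ CoAcc Δ F q := by
  classical
  set B : BTree α := BTree.node a0 l0 r0 with hBdef
  obtain ⟨a⟩ := ‹Nonempty α›
  obtain ⟨T, hTL, hsub⟩ := hall (UTree.node a (decodeF B))
  have hacc : TAccepts Δ F (encodeU T) := by
    have : encodeU T ∈ {T | TAccepts Δ F T} := by
      rw [← hL]; exact Set.mem_image_of_mem _ hTL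
    exact this
  obtain ⟨qf, hqf, hrun⟩ := hacc
  have hocc : OccAt a B (encodeU T) := by
    have h := occ_encodeU_iff.mpr hsub
    rw [show rootL (UTree.node a (decodeF B)) = a from rfl,
      show chl (UTree.node a (decodeF B)) = decodeF B from rfl, encodeF_decodeF] at h
    exact h
  obtain ⟨C, R, hCR⟩ := hocc
  rw [hCR] at hrun
  obtain ⟨v, hv, hCv⟩ := run_fill_decomp hrun
  -- v is the value on node a B R; extract the value on B
  cases hv with
  | node hBrun hRrun hd =>
    rename_i ql qr q'
    -- B is a node, so its run value is some q
    obtain ⟨q, rfl⟩ : ∃ q, ql = some q := by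
      rw [hBdef] at hBrun
      exact run_node_some hBrun
    refine ⟨q, hBrun, ?_⟩
    refine ⟨Ctx.comp C (Ctx.nodeL a Ctx.hole R), qf, hqf, ?_⟩
    exact runC_comp (RunC.nodeL (RunC.hole (some q)) hRrun hd) hCv

theorem forward_dir [Fintype α] [Nonempty α] (L : Set (UTree α))
    (hreg : RegularTreeLang (encodeU '' L))
    (hall : ∀ S : UTree α, ∃ T ∈ L, USubtree S T) :
    ∃ ε : ℝ, 0 < ε ∧ ∀ m : ℕ, ∃ n, m ≤ n ∧
      ε ≤ (Nat.card {T : UTree α // T ∈ L ∧ usize T = n} : ℝ) /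
        (Nat.card {T : UTree α // usize T = n} : ℝ) := by
  classical
  obtain ⟨Q, hQ, Δ, F, hL⟩ := hreg
  obtain ⟨M, hM⟩ := exists_coacc_bound (α := α) (Δ := Δ) F
  -- small context for each state
  have hctx : ∀ q : Q, ∃ C : Ctx α, csize C ≤ M ∧
      (CoAcc Δ F q → ∃ qf ∈ F, RunC Δ C (some q) (some qf)) := by
    intro q
    by_cases h : CoAcc Δ F q
    · obtain ⟨C, qf, h1, h2, h3⟩ := hM q h
      exact ⟨C, h3, fun _ => ⟨qf, h1, h2⟩⟩
    · exact ⟨Ctx.hole, by simp [csize], fun hc => absurd hc h⟩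
  choose cof hcof1 hcof2 using hctx
  set s := Fintype.card α with hs
  have hs1 : 1 ≤ s := Fintype.card_pos
  set K : ℕ := (Fintype.card Q + 1) * s ^ M * 4 ^ M with hK
  have hK1 : 1 ≤ K := by
    have h1 : 0 < s ^ M := pow_pos (by omega) _
    have h2 : 0 < 4 ^ M := pow_pos (by omega) _
    have h3 : 0 < Fintype.card Q + 1 := by omega
    exact Nat.mul_pos (Nat.mul_pos h3 h1) h2
  refine ⟨1 / (K : ℝ), by positivity, ?_⟩
  intro m
  -- key counting step
  have key : ∃ n, m + 1 ≤ n ∧ n ≤ m + 1 + M ∧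
      cnt α (m + 1) ≤ Fintype.card Q * Nat.card {T : UTree α // T ∈ L ∧ usize T = n} := by
    have hsel : ∀ B : {B : BTree α // B.size = m + 1},
        ∃ q : Q, Run Δ B.1 (some q) ∧ CoAcc Δ F q := by
      rintro ⟨B, hB⟩
      cases B with
      | nil => simp [BTree.size] at hB
      | node a l r => exact coacc_of_tree hL hall a l r
    choose sel hsel1 hsel2 using hsel
    set G := fun q : Q => {X : BTree α // TAccepts Δ F X ∧ X.size = m + 1 + csize (cof q)}
      with hG
    haveI : ∀ q, Finite (G q) := fun q => finite_accepted _
    have hmap : ∀ B : {B : BTree α // B.size = m + 1},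
        TAccepts Δ F (fill (cof (sel B)) B.1) ∧
          (fill (cof (sel B)) B.1).size = m + 1 + csize (cof (sel B)) := by
      intro B
      obtain ⟨qf, hqf, hrc⟩ := hcof2 (sel B) (hsel2 B)
      exact ⟨⟨qf, hqf, run_fill_comp (hsel1 B) hrc⟩, by rw [size_fill, B.2]; omega⟩
    have hinj : Function.Injective
        (fun B : {B : BTree α // B.size = m + 1} =>
          (⟨sel B, ⟨fill (cof (sel B)) B.1, hmap B⟩⟩ : Σ q : Q, G q)) := by
      intro B₁ B₂ h
      have h1 : sel B₁ = sel B₂ := congrArg Sigma.fst h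
      have h2 : fill (cof (sel B₁)) B₁.1 = fill (cof (sel B₂)) B₂.1 :=
        congrArg (fun x : Σ q : Q, G q => x.2.1) h
      rw [← h1] at h2
      exact Subtype.ext (fill_injective _ h2)
    have hcard : cnt α (m + 1) ≤ Nat.card (Σ q : Q, G q) := by
      haveI : Finite (Σ q : Q, G q) := inferInstance
      exact Nat.card_le_card_of_injective _ hinj
    letI : ∀ q, Fintype (G q) := fun q => Fintype.ofFinite _
    have hcard2 : Nat.card (Σ q : Q, G q) = ∑ q : Q, Nat.card (G q) := by
      rw [Nat.card_eq_fintype_card, Fintype.card_sigma]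
      exact Finset.sum_congr rfl fun q _ => (Nat.card_eq_fintype_card).symm
    rw [hcard2] at hcard
    rcases isEmpty_or_nonempty Q with hQe | hQn
    · rw [Finset.sum_of_isEmpty] at hcard
      exact absurd hcard (by have := cnt_pos (α := α) (m + 1); omega)
    · obtain ⟨q₀, _, hq₀⟩ := Finset.exists_max_image Finset.univ
        (fun q => Nat.card (G q)) ⟨Classical.arbitrary Q, Finset.mem_univ _⟩
      have hsum : ∑ q : Q, Nat.card (G q) ≤ Fintype.card Q * Nat.card (G q₀) := by
        calc ∑ q : Q, Nat.card (G q) ≤ Finset.univ.card • Nat.card (G q₀) :=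
              Finset.sum_le_card_nsmul _ _ _ (fun q _ => hq₀ q (Finset.mem_univ q))
          _ = Fintype.card Q * Nat.card (G q₀) := by
              rw [smul_eq_mul, Finset.card_univ]
      refine ⟨m + 1 + csize (cof q₀), by omega, by have := hcof1 q₀; omega, ?_⟩
      rw [← card_accepted_eq hL]
      exact hcard.trans hsum
  obtain ⟨n, hn1, hn2, hcnt⟩ := key
  refine ⟨n, by omega, ?_⟩
  -- numeric estimates
  have hu : Nat.card {T : UTree α // usize T = n} = s * cnt α (n - 1) := by
    have h := ucnt_succ (α := α) (n - 1)
    rw [show (n - 1) + 1 = n from by omega] at h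
    exact h
  have hub : ucnt α n ≤ K * Nat.card {T : UTree α // T ∈ L ∧ usize T = n} := by
    have e1 : ucnt α n = s * cnt α (n - 1) := hu
    have e2 : cnt α (n - 1) = s ^ (n - 1) * catalan (n - 1) := cnt_eq _
    have e3 : catalan (n - 1) ≤ 4 ^ M * catalan m := catalan_le_of_le (by omega)
    have e4 : s ^ (n - 1) ≤ s ^ (m + M) := Nat.pow_le_pow_right (by omega) (by omega)
    have e5 : cnt α (m + 1) = s ^ (m + 1) * catalan (m + 1) := cnt_eq _
    have e6 : catalan m ≤ catalan (m + 1) := catalan_monotone m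
    calc ucnt α n = s * (s ^ (n - 1) * catalan (n - 1)) := by rw [e1, e2]
      _ ≤ s * (s ^ (m + M) * (4 ^ M * catalan m)) := by
          refine Nat.mul_le_mul_left _ (Nat.mul_le_mul e4 e3)
      _ = (s ^ M * 4 ^ M) * (s ^ (m + 1) * catalan m) := by ring
      _ ≤ (s ^ M * 4 ^ M) * (s ^ (m + 1) * catalan (m + 1)) := by
          refine Nat.mul_le_mul_left _ (Nat.mul_le_mul_left _ e6)
      _ = (s ^ M * 4 ^ M) * cnt α (m + 1) := by rw [e5]
      _ ≤ (s ^ M * 4 ^ M) *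
            (Fintype.card Q * Nat.card {T : UTree α // T ∈ L ∧ usize T = n}) := by
          exact Nat.mul_le_mul_left _ hcnt
      _ ≤ K * Nat.card {T : UTree α // T ∈ L ∧ usize T = n} := by
          rw [hK]
          rw [show s ^ M * 4 ^ M * (Fintype.card Q * Nat.card {T : UTree α // T ∈ L ∧ usize T = n})
            = (Fintype.card Q * (s ^ M * 4 ^ M)) * Nat.card {T : UTree α // T ∈ L ∧ usize T = n}
            from by ring]
          rw [show (Fintype.card Q + 1) * s ^ M * 4 ^ M
            = ((Fintype.card Q + 1) * (s ^ M * 4 ^ M)) from by ring]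
          exact Nat.mul_le_mul_right _ (Nat.mul_le_mul_right _ (by omega))
  have hu' : ucnt α n = s * cnt α (n - 1) := hu
  have hupos : 0 < ucnt α n := by
    rw [hu']
    exact Nat.mul_pos (by omega) (cnt_pos _)
  have hcast : (0 : ℝ) < (ucnt α n : ℝ) := by exact_mod_cast hupos
  rw [show Nat.card {T : UTree α // usize T = n} = ucnt α n from rfl]
  rw [div_le_div_iff₀ (by positivity) hcast]
  have : (ucnt α n : ℝ) ≤ (K : ℝ) * (Nat.card {T : UTree α // T ∈ L ∧ usize T = n} : ℝ) := by
    exact_mod_cast hub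
  calc (1 : ℝ) * (ucnt α n : ℝ) = (ucnt α n : ℝ) := by ring
    _ ≤ (K : ℝ) * (Nat.card {T : UTree α // T ∈ L ∧ usize T = n} : ℝ) := this
    _ = (Nat.card {T : UTree α // T ∈ L ∧ usize T = n} : ℝ) * (K : ℝ) := by ring

end AuxC

section AuxD
variable {α : Type*}

/-- erase decorations -/
def er : BTree (α × Bool) → BTree α
  | .nil => .nil
  | .node ab l r => .node ab.1 (er l) (er r)

def trues : BTree (α × Bool) → ℕ
  | .nil => 0
  | .node ab l r => (if ab.2 then 1 else 0) + trues l + trues r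

/-- insert a copy of the pattern above the left child of every marked node -/
def ins (sa : α) (P : BTree α) : BTree (α × Bool) → BTree α
  | .nil => .nil
  | .node ab l r =>
      if ab.2 then .node ab.1 (.node sa P (ins sa P l)) (ins sa P r)
      else .node ab.1 (ins sa P l) (ins sa P r)

theorem size_er (X : BTree (α × Bool)) : (er X).size = X.size := by
  induction X with
  | nil => rfl
  | node ab l r ihl ihr => simp [er, BTree.size, ihl, ihr]

theorem size_ins (sa : α) (P : BTree α) (X : BTree (α × Bool)) :
    (ins sa P X).size = X.size + (P.size + 1) * trues X := by
  induction X with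
  | nil => simp [ins, BTree.size, trues]
  | node ab l r ihl ihr =>
    obtain ⟨a, b⟩ := ab
    cases b <;>
      simp only [ins, trues, BTree.size, ihl, ihr, if_true, if_false, Bool.false_eq_true,
        ite_true, ite_false] <;> ring

theorem ins_eq_er {sa : α} {P : BTree α} {X : BTree (α × Bool)} (h : trues X = 0) :
    ins sa P X = er X := by
  induction X with
  | nil => rfl
  | node ab l r ihl ihr =>
    rw [trues] at h
    have hb : ab.2 = false := by
      by_contra hc
      simp only [Bool.not_eq_false] at hc
      rw [hc] at h
      simp at h
    rw [hb] at h
    simp only [Bool.false_eq_true, if_false] at h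
    rw [ins, er, hb]
    simp only [Bool.false_eq_true, if_false]
    rw [ihl (by omega), ihr (by omega)]

theorem occ_ins {sa : α} {P : BTree α} {X : BTree (α × Bool)} (h : 1 ≤ trues X) :
    OccAt sa P (ins sa P X) := by
  induction X with
  | nil => rw [trues] at h; omega
  | node ab l r ihl ihr =>
    by_cases hb : ab.2
    · rw [ins, if_pos hb]
      exact occ_left _ _ (occ_here _ _ _)
    · have hb' : ab.2 = false := by simpa using hb
      rw [ins, if_neg hb]
      rw [trues, hb'] at h
      simp only [Bool.false_eq_true, if_false] at h
      rcases Nat.lt_or_ge (trues l) 1 with hl | hl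
      · exact occ_right _ _ (ihr (by omega))
      · exact occ_left _ _ (ihl hl)

theorem ins_ne_pattern_node {sa : α} {P : BTree α} (hP : ¬ OccAt sa P P)
    {W : BTree (α × Bool)} (hW : ¬ OccAt sa P (er W)) (Z : BTree α) :
    ins sa P W ≠ BTree.node sa P Z := by
  cases W with
  | nil => intro h; rw [ins] at h; cases h
  | node cd ll lr =>
    obtain ⟨c, d⟩ := cd
    cases d with
    | true =>
      intro h
      rw [ins] at h
      simp only [if_true] at h
      injection h with h1 h2 h3
      -- h2 : node sa P (ins sa P ll) = P : size contradiction
      have := congrArg BTree.size h2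
      rw [BTree.size] at this
      omega
    | false =>
      intro h
      rw [ins] at h
      simp only [if_false, Bool.false_eq_true] at h
      injection h with h1 h2 h3
      -- h1 : c = sa, h2 : ins sa P ll = P
      rcases Nat.lt_or_ge (trues ll) 1 with htl | htl
      · have he : ins sa P ll = er ll := ins_eq_er (by omega)
        rw [he] at h2
        refine hW ?_
        rw [er, h1, h2]
        exact occ_here _ _ _
      · have hocc := occ_ins (sa := sa) (P := P) htl
        rw [h2] at hocc
        exact hP hocc

theorem ins_injective {sa : α} {P : BTree α} (hP : ¬ OccAt sa P P) :
    ∀ X Y : BTree (α × Bool), ¬ OccAt sa P (er X) → ¬ OccAt sa P (er Y) →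
      ins sa P X = ins sa P Y → X = Y := by
  intro X
  induction X with
  | nil =>
    intro Y hX hY h
    cases Y with
    | nil => rfl
    | node ab l r =>
      obtain ⟨a, b⟩ := ab
      cases b <;> simp [ins] at h
  | node ab l r ihl ihr =>
    intro Y hX hY h
    obtain ⟨a₁, b₁⟩ := ab
    have hXl : ¬ OccAt sa P (er l) := fun hc => hX (occ_left _ _ hc)
    have hXr : ¬ OccAt sa P (er r) := fun hc => hX (occ_right _ _ hc)
    cases Y with
    | nil =>
      cases b₁ <;> simp [ins] at h
    | node ab₂ l₂ r₂ =>
      obtain ⟨a₂, b₂⟩ := ab₂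
      have hYl : ¬ OccAt sa P (er l₂) := fun hc => hY (occ_left _ _ hc)
      have hYr : ¬ OccAt sa P (er r₂) := fun hc => hY (occ_right _ _ hc)
      cases b₁ with
      | true =>
        cases b₂ with
        | true =>
          rw [ins, ins] at h
          simp only [if_true] at h
          injection h with h1 h2 h3
          injection h2 with h2a h2b h2c
          rw [h1, ihl _ hXl hYl h2c, ihr _ hXr hYr h3]
        | false =>
          rw [ins, ins] at h
          simp only [if_true, if_false, Bool.false_eq_true] at h
          injection h with h1 h2 h3
          exact absurd h2.symm (ins_ne_pattern_node hP hYl (ins sa P l))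
      | false =>
        cases b₂ with
        | true =>
          rw [ins, ins] at h
          simp only [if_true, if_false, Bool.false_eq_true] at h
          injection h with h1 h2 h3
          exact absurd h2 (ins_ne_pattern_node hP hXl (ins sa P l₂))
        | false =>
          rw [ins, ins] at h
          simp only [if_false, Bool.false_eq_true] at h
          injection h with h1 h2 h3
          rw [h1, ihl _ hXl hYl h2, ihr _ hXr hYr h3]

/-- the list of marks of a decorated tree in preorder -/
def bools : BTree (α × Bool) → List Bool
  | .nil => []
  | .node ab l r => ab.2 :: (bools l ++ bools r)

/-- decorate a tree with a list of marks in preorder -/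
def paint : BTree α → List Bool → BTree (α × Bool)
  | .nil, _ => .nil
  | .node a l r, bs =>
      .node (a, bs.headI) (paint l (bs.tail.take l.size)) (paint r (bs.tail.drop l.size))

theorem er_paint (B : BTree α) : ∀ bs, er (paint B bs) = B := by
  induction B with
  | nil => intro bs; rfl
  | node a l r ihl ihr => intro bs; rw [paint, er, ihl, ihr]

theorem length_bools (X : BTree (α × Bool)) : (bools X).length = X.size := by
  induction X with
  | nil => rfl
  | node ab l r ihl ihr => simp [bools, BTree.size, ihl, ihr]

theorem count_bools (X : BTree (α × Bool)) : (bools X).count true = trues X := by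
  induction X with
  | nil => rfl
  | node ab l r ihl ihr =>
    rw [bools, trues, List.count_cons, List.count_append, ihl, ihr]
    by_cases hb : ab.2
    · simp [hb]; omega
    · have hb' : ab.2 = false := by simpa using hb
      simp [hb']

theorem bools_paint (B : BTree α) : ∀ bs : List Bool, bs.length = B.size →
    bools (paint B bs) = bs := by
  induction B with
  | nil =>
    intro bs h
    rw [BTree.size] at h
    rw [List.length_eq_zero_iff.mp h]
    rfl
  | node a l r ihl ihr =>
    intro bs h
    match bs with
    | [] => rw [BTree.size] at h; simp at h
    | b :: t =>
      rw [BTree.size] at h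
      simp only [List.length_cons] at h
      rw [paint, bools]
      simp only [List.headI, List.tail]
      rw [ihl _ (by rw [List.length_take]; omega), ihr _ (by rw [List.length_drop]; omega)]
      rw [List.take_append_drop]

theorem paint_bools (X : BTree (α × Bool)) : paint (er X) (bools X) = X := by
  induction X with
  | nil => rfl
  | node ab l r ihl ihr =>
    rw [er, bools, paint]
    simp only [List.headI, List.tail]
    rw [size_er, ← length_bools l, List.take_left, List.drop_left, ihl, ihr]

theorem trues_paint (B : BTree α) (bs : List Bool) (h : bs.length = B.size) :
    trues (paint B bs) = bs.count true := by
  rw [← count_bools, bools_paint B bs h]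

/-- number of bool lists of length m with ℓ trues -/
noncomputable def lbcnt (m ℓ : ℕ) : ℕ :=
  Nat.card {l : List Bool // l.length = m ∧ l.count true = ℓ}

theorem finite_list_len : ∀ m : ℕ, Finite {l : List Bool // l.length = m} := by
  intro m
  induction m with
  | zero =>
    have : Subsingleton {l : List Bool // l.length = 0} := by
      constructor
      rintro ⟨l₁, h₁⟩ ⟨l₂, h₂⟩
      rw [List.length_eq_zero_iff] at h₁ h₂
      simp [h₁, h₂]
    infer_instance
  | succ m ih =>
    have e : {l : List Bool // l.length = m + 1} ≃ Bool × {l : List Bool // l.length = m} :=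
      { toFun := fun x =>
          match x with
          | ⟨[], h⟩ => absurd h (by simp)
          | ⟨b :: t, h⟩ => (b, ⟨t, by simpa using h⟩)
        invFun := fun x => ⟨x.1 :: x.2.1, by simp [x.2.2]⟩
        left_inv := by rintro ⟨l, h⟩; match l with
          | [] => exact absurd h (by simp)
          | b :: t => rfl
        right_inv := by rintro ⟨b, t, h⟩; rfl }
    exact Finite.of_equiv _ e.symm

theorem finite_list_cnt (m ℓ : ℕ) : Finite {l : List Bool // l.length = m ∧ l.count true = ℓ} := by
  have := finite_list_len m
  exact Finite.of_injective
    (fun x => (⟨x.1, x.2.1⟩ : {l : List Bool // l.length = m}))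
    (by intro x y h; have h2 := congrArg Subtype.val h; exact Subtype.ext h2)

theorem lbcnt_zero (m : ℕ) : lbcnt m 0 = 1 := by
  have e : {l : List Bool // l.length = m ∧ l.count true = 0} ≃ Unit :=
    { toFun := fun _ => ()
      invFun := fun _ => ⟨List.replicate m false, by
        refine ⟨by simp, ?_⟩
        rw [List.count_replicate]
        simp⟩
      left_inv := by
        rintro ⟨l, h1, h2⟩
        have : l = List.replicate m false := by
          refine List.eq_replicate_iff.mpr ⟨h1, fun b hb => ?_⟩
          cases b
          · rfl
          · exact absurd (List.count_eq_zero.mp h2 hb) (fun h => h)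
        simp [this]
      right_inv := fun _ => rfl }
  rw [lbcnt, Nat.card_congr e]; simp

theorem lbcnt_zero_succ (ℓ : ℕ) : lbcnt 0 (ℓ + 1) = 0 := by
  have : IsEmpty {l : List Bool // l.length = 0 ∧ l.count true = ℓ + 1} := by
    constructor
    rintro ⟨l, h1, h2⟩
    rw [List.length_eq_zero_iff] at h1
    rw [h1] at h2
    simp at h2
  rw [lbcnt]
  exact Nat.card_of_isEmpty

theorem lbcnt_succ_succ (m ℓ : ℕ) : lbcnt (m + 1) (ℓ + 1) = lbcnt m ℓ + lbcnt m (ℓ + 1) := by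
  have e : {l : List Bool // l.length = m + 1 ∧ l.count true = ℓ + 1} ≃
      ({l : List Bool // l.length = m ∧ l.count true = ℓ} ⊕
        {l : List Bool // l.length = m ∧ l.count true = ℓ + 1}) :=
    { toFun := fun x =>
        match x with
        | ⟨[], h⟩ => absurd h.1 (by simp)
        | ⟨true :: t, h⟩ => Sum.inl ⟨t, by
            obtain ⟨h1, h2⟩ := h
            simp only [List.length_cons] at h1
            rw [List.count_cons] at h2
            simp at h2
            exact ⟨by omega, by omega⟩⟩
        | ⟨false :: t, h⟩ => Sum.inr ⟨t, by
            obtain ⟨h1, h2⟩ := h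
            simp only [List.length_cons] at h1
            rw [List.count_cons] at h2
            simp [Bool.false_eq_true] at h2
            exact ⟨by omega, by omega⟩⟩
      invFun := fun x =>
        match x with
        | Sum.inl ⟨t, h⟩ => ⟨true :: t, by simp [List.count_cons, h.1, h.2]⟩
        | Sum.inr ⟨t, h⟩ => ⟨false :: t, by simp [List.count_cons, h.1, h.2]⟩
      left_inv := by
        rintro ⟨l, h⟩
        match l with
        | [] => exact absurd h.1 (by simp)
        | true :: t => rfl
        | false :: t => rfl
      right_inv := by rintro (⟨t, h⟩ | ⟨t, h⟩) <;> rfl }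
  haveI := finite_list_cnt m ℓ
  haveI := finite_list_cnt m (ℓ + 1)
  rw [lbcnt, Nat.card_congr e, Nat.card_sum]
  rfl

theorem lbcnt_eq (m : ℕ) : ∀ ℓ : ℕ, lbcnt m ℓ = m.choose ℓ := by
  induction m with
  | zero =>
    intro ℓ
    match ℓ with
    | 0 => rw [lbcnt_zero]; rfl
    | ℓ + 1 => rw [lbcnt_zero_succ]; rfl
  | succ m ih =>
    intro ℓ
    match ℓ with
    | 0 => rw [lbcnt_zero]; rfl
    | ℓ + 1 =>
      rw [lbcnt_succ_succ, ih ℓ, ih (ℓ + 1), Nat.choose_succ_succ]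

end AuxD

section AuxE
variable {α : Type*}

theorem catalan_le_four_pow (n : ℕ) : catalan n ≤ 4 ^ n := by
  induction n with
  | zero => simp
  | succ n ih =>
    calc catalan (n + 1) ≤ 4 * catalan n := catalan_succ_le n
      _ ≤ 4 * 4 ^ n := by omega
      _ = 4 ^ (n + 1) := by ring

/-- number of pattern-free trees of a given size -/
noncomputable def pfcnt (sa : α) (P : BTree α) (n : ℕ) : ℕ :=
  Nat.card {B : BTree α // ¬ OccAt sa P B ∧ B.size = n}

theorem finite_pf [Finite α] (sa : α) (P : BTree α) (n : ℕ) :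
    Finite {B : BTree α // ¬ OccAt sa P B ∧ B.size = n} := by
  have := finite_subtype_size (α := α) n
  refine Finite.of_injective
    (fun x => (⟨x.1, x.2.2⟩ : {B : BTree α // B.size = n})) ?_
  intro x y h
  have h2 := congrArg Subtype.val h
  exact Subtype.ext h2

theorem size_paint (B : BTree α) (bs : List Bool) : (paint B bs).size = B.size := by
  have h := size_er (paint B bs)
  rw [er_paint] at h
  exact h.symm

theorem key_count [Fintype α] {sa : α} {P : BTree α} (hP : ¬ OccAt sa P P) (n ℓ : ℕ) :
    pfcnt sa P n * n.choose ℓ ≤ cnt α (n + (P.size + 1) * ℓ) := by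
  classical
  rw [← lbcnt_eq]
  have hprod : pfcnt sa P n * lbcnt n ℓ =
      Nat.card ({B : BTree α // ¬ OccAt sa P B ∧ B.size = n} ×
        {l : List Bool // l.length = n ∧ l.count true = ℓ}) := (Nat.card_prod _ _).symm
  rw [pfcnt, lbcnt, cnt] at *
  rw [hprod]
  haveI := finite_subtype_size (α := α) (n + (P.size + 1) * ℓ)
  refine Nat.card_le_card_of_injective
    (fun x => (⟨ins sa P (paint x.1.1 x.2.1), ?_⟩ :
      {B : BTree α // B.size = n + (P.size + 1) * ℓ})) ?_
  · rw [size_ins, size_paint, x.1.2.2, trues_paint _ _ (by rw [x.2.2.1, x.1.2.2]), x.2.2.2]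
  · rintro ⟨⟨B₁, hB₁⟩, ⟨bs₁, hbs₁⟩⟩ ⟨⟨B₂, hB₂⟩, ⟨bs₂, hbs₂⟩⟩ h
    have hval := congrArg Subtype.val h
    simp only at hval
    have hps : paint B₁ bs₁ = paint B₂ bs₂ := by
      refine ins_injective hP _ _ ?_ ?_ hval
      · rw [er_paint]; exact hB₁.1
      · rw [er_paint]; exact hB₂.1
    have hBeq : B₁ = B₂ := by
      rw [← er_paint B₁ bs₁, hps, er_paint]
    have hbseq : bs₁ = bs₂ := by
      rw [← bools_paint B₁ bs₁ (by rw [hbs₁.1, hB₁.2]), hps,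
        bools_paint B₂ bs₂ (by rw [hbs₂.1, hB₂.2])]
    simp only [Prod.mk.injEq, Subtype.mk.injEq]
    exact ⟨hBeq, hbseq⟩

theorem master_count [Fintype α] [Nonempty α] {sa : α} {P : BTree α}
    (hP : ¬ OccAt sa P P) (n : ℕ)
    (hn : 4 * (4 * Fintype.card α) ^ (P.size + 1) ≤ n) :
    pfcnt sa P n * 2 ^ (n / (4 * (4 * Fintype.card α) ^ (P.size + 1)))
      ≤ (4 * Fintype.card α) ^ n := by
  set s := Fintype.card α with hsdef
  have hs1 : 1 ≤ s := Fintype.card_pos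
  set k := P.size + 1 with hkdef
  set E := 4 * s with hEdef
  have hE : 4 ≤ E := by omega
  set D := E ^ k with hDdef
  have hD1 : 1 ≤ D := Nat.one_le_pow _ _ (by omega)
  set ℓ := n / (4 * D) with hldef
  have hl1 : 1 ≤ ℓ := by
    rw [hldef]
    exact Nat.one_le_div_iff (by omega) |>.mpr hn
  have hlMul : ℓ * (4 * D) ≤ n := Nat.div_mul_le_self n (4 * D)
  have h1 : pfcnt sa P n * n.choose ℓ ≤ cnt α (n + k * ℓ) := key_count hP n ℓ
  have hcnt : cnt α (n + k * ℓ) ≤ E ^ (n + k * ℓ) := by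
    rw [cnt_eq, hEdef, mul_pow]
    calc s ^ (n + k * ℓ) * catalan (n + k * ℓ)
        ≤ s ^ (n + k * ℓ) * 4 ^ (n + k * ℓ) :=
          Nat.mul_le_mul_left _ (catalan_le_four_pow _)
      _ = 4 ^ (n + k * ℓ) * s ^ (n + k * ℓ) := by ring
  have h2 : (n + 1 - ℓ) ^ ℓ ≤ Nat.factorial ℓ * n.choose ℓ := by
    rw [← Nat.descFactorial_eq_factorial_mul_choose]
    exact Nat.pow_sub_le_descFactorial n ℓ
  have h3 : Nat.factorial ℓ ≤ ℓ ^ ℓ := Nat.factorial_le_pow ℓ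
  have h4 : 2 * D * ℓ ≤ n + 1 - ℓ := by
    have ha : ℓ * (2 * D) + ℓ = ℓ * (2 * D + 1) := by ring
    have hb : ℓ * (2 * D + 1) ≤ ℓ * (4 * D) := Nat.mul_le_mul_left ℓ (by omega)
    have hd : 2 * D * ℓ = ℓ * (2 * D) := by ring
    omega
  have chain : pfcnt sa P n * (2 * D * ℓ) ^ ℓ ≤ E ^ n * (D ^ ℓ * ℓ ^ ℓ) := by
    calc pfcnt sa P n * (2 * D * ℓ) ^ ℓ
        ≤ pfcnt sa P n * (n + 1 - ℓ) ^ ℓ :=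
          Nat.mul_le_mul_left _ (Nat.pow_le_pow_left h4 ℓ)
      _ ≤ pfcnt sa P n * (Nat.factorial ℓ * n.choose ℓ) := Nat.mul_le_mul_left _ h2
      _ ≤ pfcnt sa P n * (ℓ ^ ℓ * n.choose ℓ) :=
          Nat.mul_le_mul_left _ (Nat.mul_le_mul_right _ h3)
      _ = (pfcnt sa P n * n.choose ℓ) * ℓ ^ ℓ := by ring
      _ ≤ E ^ (n + k * ℓ) * ℓ ^ ℓ := Nat.mul_le_mul_right _ (h1.trans hcnt)
      _ = E ^ n * (D ^ ℓ * ℓ ^ ℓ) := by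
          rw [pow_add, pow_mul]
          ring
  have hexp : (2 * D * ℓ) ^ ℓ = 2 ^ ℓ * D ^ ℓ * ℓ ^ ℓ := by
    rw [mul_pow, mul_pow]
  have hpos : 0 < D ^ ℓ * ℓ ^ ℓ :=
    Nat.mul_pos (pow_pos (by omega) _) (pow_pos (by omega) _)
  have final : pfcnt sa P n * 2 ^ ℓ * (D ^ ℓ * ℓ ^ ℓ) ≤ E ^ n * (D ^ ℓ * ℓ ^ ℓ) := by
    calc pfcnt sa P n * 2 ^ ℓ * (D ^ ℓ * ℓ ^ ℓ)
        = pfcnt sa P n * (2 * D * ℓ) ^ ℓ := by rw [hexp]; ring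
      _ ≤ E ^ n * (D ^ ℓ * ℓ ^ ℓ) := chain
  exact Nat.le_of_mul_le_mul_right final hpos

theorem denom_bound [Fintype α] [Nonempty α] (n : ℕ) (hn : 1 ≤ n) :
    (4 * Fintype.card α) ^ n ≤ 8 * n ^ 2 * ucnt α n := by
  set s := Fintype.card α with hsdef
  have hs1 : 1 ≤ s := Fintype.card_pos
  obtain ⟨m, rfl⟩ : ∃ m, n = m + 1 := ⟨n - 1, by omega⟩
  have hu : ucnt α (m + 1) = s * cnt α m := ucnt_succ m
  have h4 : 4 ^ m ≤ 2 * (m + 1) ^ 2 * catalan m := four_pow_le_catalan m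
  rw [hu, cnt_eq]
  calc (4 * s) ^ (m + 1) = 4 * 4 ^ m * (s * s ^ m) := by rw [mul_pow]; ring
    _ ≤ 4 * (2 * (m + 1) ^ 2 * catalan m) * (s * s ^ m) :=
        Nat.mul_le_mul_right _ (Nat.mul_le_mul_left _ h4)
    _ = 8 * (m + 1) ^ 2 * (s * (s ^ m * catalan m)) := by ring

theorem numer_bound [Fintype α] {L : Set (UTree α)} {S : UTree α}
    (hS : ∀ T ∈ L, ¬ USubtree S T) (n : ℕ) :
    Nat.card {T : UTree α // T ∈ L ∧ usize T = n}
      ≤ pfcnt (rootL S) (encodeF (chl S)) n := by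
  haveI := finite_pf (α := α) (rootL S) (encodeF (chl S)) n
  refine Nat.card_le_card_of_injective
    (fun x => (⟨encodeU x.1, fun hocc => hS x.1 x.2.1 (occ_encodeU_iff.mp hocc),
      by rw [size_encodeU]; exact x.2.2⟩ :
        {B : BTree α // ¬ OccAt (rootL S) (encodeF (chl S)) B ∧ B.size = n})) ?_
  intro x y h
  have h2 := congrArg Subtype.val h
  exact Subtype.ext (encodeU_injective h2)

theorem ucnt_pos [Fintype α] [Nonempty α] (n : ℕ) (hn : 1 ≤ n) : 0 < ucnt α n := by
  have h := ucnt_succ (α := α) (n - 1)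
  rw [show (n - 1) + 1 = n from by omega] at h
  rw [h]
  exact Nat.mul_pos Fintype.card_pos (cnt_pos _)

theorem backward_dir [Fintype α] [Nonempty α] (L : Set (UTree α)) (S : UTree α)
    (hS : ∀ T ∈ L, ¬ USubtree S T) :
    Tendsto (fun n => (Nat.card {T : UTree α // T ∈ L ∧ usize T = n} : ℝ) /
        (Nat.card {T : UTree α // usize T = n} : ℝ)) atTop (𝓝 0) := by
  classical
  set sa := rootL S with hsa
  set P := encodeF (chl S) with hPdef
  have hP : ¬ OccAt sa P P := pat_not_occ_pat
  set s := Fintype.card α with hsdef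
  have hs1 : 1 ≤ s := Fintype.card_pos
  set k := P.size + 1 with hk
  set W : ℕ := 4 * (4 * s) ^ k with hW
  have hW1 : 1 ≤ W := by
    have : 1 ≤ (4 * s) ^ k := Nat.one_le_pow _ _ (by omega)
    omega
  set C : ℝ := 8 * (W : ℝ) ^ 2 with hC
  -- the dominating sequence
  set F : ℕ → ℝ := fun j => (2 * C) * (((j + 1 : ℕ) : ℝ) ^ 2 * (1 / 2) ^ (j + 1)) with hF
  have hFtend : Tendsto F atTop (𝓝 0) := by
    have hsum : Tendsto (fun j : ℕ => ((j : ℝ)) ^ 2 * (1 / 2) ^ j) atTop (𝓝 0) := by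
      refine (summable_pow_mul_geometric_of_norm_lt_one (R := ℝ) 2 (r := (1 / 2 : ℝ)) ?_).tendsto_atTop_zero
      rw [Real.norm_eq_abs, abs_of_pos (by norm_num : (0:ℝ) < 1 / 2)]
      norm_num
    have hshift : Tendsto (fun j : ℕ => (((j + 1 : ℕ) : ℝ)) ^ 2 * (1 / 2) ^ (j + 1))
        atTop (𝓝 0) := hsum.comp (tendsto_add_atTop_nat 1)
    have h3 := hshift.const_mul (2 * C)
    rw [mul_zero] at h3
    rw [hF]
    exact h3
  have hdiv : Tendsto (fun n : ℕ => n / W) atTop atTop := by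
    refine tendsto_atTop_atTop.mpr fun b => ⟨b * W, fun n hn => ?_⟩
    have h := Nat.div_le_div_right (c := W) hn
    rwa [Nat.mul_div_cancel b (by omega)] at h
  have hcomp : Tendsto (fun n : ℕ => F (n / W)) atTop (𝓝 0) := hFtend.comp hdiv
  -- squeeze
  refine tendsto_of_tendsto_of_tendsto_of_le_of_le' tendsto_const_nhds hcomp ?_ ?_
  · exact Eventually.of_forall fun n => by positivity
  · filter_upwards [eventually_ge_atTop W] with n hn
    set ℓ := n / W with hldef
    have hn1 : 1 ≤ n := le_trans hW1 hn
    have hmaster : pfcnt sa P n * 2 ^ ℓ ≤ (4 * s) ^ n := master_count hP n hn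
    have hdenom : (4 * s) ^ n ≤ 8 * n ^ 2 * ucnt α n := denom_bound n hn1
    have hnumer : Nat.card {T : UTree α // T ∈ L ∧ usize T = n} ≤ pfcnt sa P n :=
      numer_bound hS n
    have hub : 0 < ucnt α n := ucnt_pos n hn1
    have hnlew : n ≤ W * (ℓ + 1) := by
      have h1 := Nat.div_add_mod n W
      have h2 := Nat.mod_lt n (show 0 < W from by omega)
      have h3 : W * (ℓ + 1) = W * (n / W) + W := by rw [hldef]; ring
      omega
    -- natural-number key inequality
    have hkey : pfcnt sa P n * 2 ^ ℓ ≤ 8 * (W * (ℓ + 1)) ^ 2 * ucnt α n := by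
      refine hmaster.trans (hdenom.trans ?_)
      have : n ^ 2 ≤ (W * (ℓ + 1)) ^ 2 := Nat.pow_le_pow_left hnlew 2
      exact Nat.mul_le_mul_right _ (Nat.mul_le_mul_left _ this)
    -- cast to ℝ
    have hu0 : (0 : ℝ) < (ucnt α n : ℝ) := by exact_mod_cast hub
    have h2l : (0 : ℝ) < (2 : ℝ) ^ ℓ := by positivity
    rw [show Nat.card {T : UTree α // usize T = n} = ucnt α n from rfl]
    rw [div_le_iff₀ hu0]
    have hkey2 : pfcnt sa P n * 2 ^ ℓ ≤ (8 * W ^ 2) * (ℓ + 1) ^ 2 * ucnt α n := by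
      calc pfcnt sa P n * 2 ^ ℓ ≤ 8 * (W * (ℓ + 1)) ^ 2 * ucnt α n := hkey
        _ = (8 * W ^ 2) * (ℓ + 1) ^ 2 * ucnt α n := by ring
    have hre : (pfcnt sa P n : ℝ) * 2 ^ ℓ ≤ C * ((ℓ + 1 : ℕ) : ℝ) ^ 2 * (ucnt α n : ℝ) := by
      rw [hC]
      push_cast
      exact_mod_cast hkey2
    have hXp : (Nat.card {T : UTree α // T ∈ L ∧ usize T = n} : ℝ) ≤ (pfcnt sa P n : ℝ) := by
      exact_mod_cast hnumer
    have h2ne : (2 : ℝ) ^ ℓ ≠ 0 := ne_of_gt h2l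
    calc (Nat.card {T : UTree α // T ∈ L ∧ usize T = n} : ℝ)
        ≤ (pfcnt sa P n : ℝ) := hXp
      _ = (pfcnt sa P n : ℝ) * 2 ^ ℓ / 2 ^ ℓ := by field_simp
      _ ≤ C * ((ℓ + 1 : ℕ) : ℝ) ^ 2 * (ucnt α n : ℝ) / 2 ^ ℓ :=
          (div_le_div_iff_of_pos_right h2l).mpr hre
      _ = F ℓ * (ucnt α n : ℝ) := by
          rw [hF]
          push_cast
          rw [div_pow, one_pow]
          rw [pow_succ]
          field_simp
          ring

end AuxE

/-- A regular language of unranked trees (i.e. one whose binary encoding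
`L^♭ = {T^♭ : T ∈ L}` is a regular tree language) is sparse iff some unranked tree `S` does not
appear as a subtree of any tree of `L`. -/
theorem sparse_unranked_iff_forbidden_subtree {α : Type*} [Fintype α] [Nonempty α]
    (L : Set (UTree α)) (hreg : RegularTreeLang (encodeU '' L)) :
    Tendsto (fun n => (Nat.card {T : UTree α // T ∈ L ∧ usize T = n} : ℝ) /
        (Nat.card {T : UTree α // usize T = n} : ℝ)) atTop (𝓝 0)
      ↔ ∃ S : UTree α, ∀ T ∈ L, ¬ USubtree S T := by
  constructor
  · intro htend
    by_contra hno
    push_neg at hno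
    obtain ⟨ε, hε, hfreq⟩ := forward_dir L hreg hno
    have h2 := htend (Iio_mem_nhds hε)
    rw [Filter.mem_map, Filter.mem_atTop_sets] at h2
    obtain ⟨N, hN⟩ := h2
    obtain ⟨n, hn, hge⟩ := hfreq N
    have hlt := hN n hn
    simp only [Set.mem_preimage, Set.mem_Iio] at hlt
    exact absurd hge (not_le.mpr hlt)
  · rintro ⟨S, hS⟩
    exact backward_dir L S hS

end Sparse
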